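/- For x, y ∈ {0,1}^n and an operator A on (ℂ²)^{⊗n}, one has ⟨x̃|(A⊗I)|ỹ⟩ = 2^{-(w(x)+w(y))/2} ∑_{b∈S} ⟨x+b|A|y+b⟩, where w denotes Hamming weight, S = {b ∈ {0,1}^n : b_i = 0 whenever x_i·y_i ≠ 1}, and + is bitwise XOR. -/

import Mathlib

open Matrix

/-- The two-qubit state assigned to a bit: `|00⟩` for `0`, `(|01⟩+|10⟩)/√2` for `1`. -/
noncomputable def pairState (b : Fin 2) : Fin 2 × Fin 2 → ℂ :=
  if b = 0 then (fun p => if p = (0, 0) then 1 else 0)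
  else (fun p => if p.1 = p.2 then 0 else ((1 / Real.sqrt 2 : ℝ) : ℂ))

/-- The `2n`-qubit state `|x̃⟩ = ⊗ᵢ |x̃ᵢ⟩`. -/
noncomputable def tilde (n : ℕ) (x : Fin n → Fin 2) : (Fin n → Fin 2 × Fin 2) → ℂ :=
  fun f => ∏ i, pairState (x i) (f i)

/-- `A ⊗ I`, with `A` acting on the first qubit of each of the `n` pairs. -/
def AI (n : ℕ) (A : Matrix (Fin n → Fin 2) (Fin n → Fin 2) ℂ) :
    Matrix (Fin n → Fin 2 × Fin 2) (Fin n → Fin 2 × Fin 2) ℂ :=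
  fun f g => A (fun i => (f i).1) (fun i => (g i).1) *
    (if (fun i => (f i).2) = (fun i => (g i).2) then 1 else 0)

/-- Hamming weight of a binary string. -/
def hWeight {n : ℕ} (x : Fin n → Fin 2) : ℕ :=
  (Finset.univ.filter fun i => x i = 1).card

lemma pairState_eval (b p q : Fin 2) :
    pairState b (p, q) =
      if p = b + q ∧ (b = 0 → q = 0) then
        (if b = 1 then ((1 / Real.sqrt 2 : ℝ) : ℂ) else 1) else 0 := by
  fin_cases b <;> fin_cases p <;> fin_cases q <;> simp [pairState]

lemma tilde_eval (n : ℕ) (x : Fin n → Fin 2) (f : Fin n → Fin 2 × Fin 2) :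
    tilde n x f =
      if (∀ i, (f i).1 = x i + (f i).2) ∧ (∀ i, x i = 0 → (f i).2 = 0) then
        ((1 / Real.sqrt 2 : ℝ) : ℂ) ^ hWeight x else 0 := by
  have h : ∀ i, pairState (x i) (f i) =
      if (f i).1 = x i + (f i).2 ∧ (x i = 0 → (f i).2 = 0) then
        (if x i = 1 then ((1 / Real.sqrt 2 : ℝ) : ℂ) else 1) else 0 := fun i => by
    rw [show f i = ((f i).1, (f i).2) from rfl, pairState_eval]
  unfold tilde
  simp only [h, Fintype.prod_ite_zero, forall_and]
  congr 1
  rw [Finset.prod_ite, Finset.prod_const, Finset.prod_const, one_pow, mul_one, hWeight]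

lemma const_eq (m k : ℕ) :
    ((1 / Real.sqrt 2 : ℝ) : ℂ) ^ m * ((1 / Real.sqrt 2 : ℝ) : ℂ) ^ k =
      (((2 : ℝ) ^ (-(((m + k : ℕ) : ℝ)) / 2) : ℝ) : ℂ) := by
  rw [← pow_add, ← Complex.ofReal_pow]
  congr 1
  have h1 : (1 / Real.sqrt 2 : ℝ) = (2:ℝ) ^ (-(1/2) : ℝ) := by
    rw [Real.sqrt_eq_rpow, one_div, ← Real.rpow_neg (by norm_num)]
  rw [h1, ← Real.rpow_natCast ((2:ℝ) ^ (-(1/2):ℝ)) (m + k), ← Real.rpow_mul (by norm_num)]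
  congr 1
  push_cast
  ring

/-- `⟨x̃|(A⊗I)|ỹ⟩ = 2^{-(w(x)+w(y))/2} ∑_{b ∈ S} ⟨x+b|A|y+b⟩`, where
`S = {b : bᵢ = 0 whenever xᵢ·yᵢ ≠ 1}` and `+` is bitwise XOR. -/
theorem stmt13 (n : ℕ) (A : Matrix (Fin n → Fin 2) (Fin n → Fin 2) ℂ)
    (x y : Fin n → Fin 2) :
    star (tilde n x) ⬝ᵥ (AI n A).mulVec (tilde n y) =
      (((2 : ℝ) ^ (-(((hWeight x + hWeight y : ℕ) : ℝ)) / 2) : ℝ) : ℂ) *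
        ∑ b : Fin n → Fin 2,
          (if ∀ i, x i * y i ≠ 1 → b i = 0 then A (x + b) (y + b) else 0) := by
  classical
  set Cx : ℂ := ((1 / Real.sqrt 2 : ℝ) : ℂ) ^ hWeight x with hCx
  set Cy : ℂ := ((1 / Real.sqrt 2 : ℝ) : ℂ) ^ hWeight y with hCy
  have hsx : star Cx = Cx := by rw [hCx, ← Complex.ofReal_pow]; exact Complex.conj_ofReal _
  calc star (tilde n x) ⬝ᵥ (AI n A).mulVec (tilde n y)
      = ∑ f, ∑ g, star (tilde n x f) * (AI n A f g * tilde n y g) := by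
        simp [dotProduct, Matrix.mulVec, Finset.mul_sum]
    _ = ∑ p : (Fin n → Fin 2) × (Fin n → Fin 2),
          ∑ q : (Fin n → Fin 2) × (Fin n → Fin 2),
          star (tilde n x (fun i => (p.1 i, p.2 i))) *
            (AI n A (fun i => (p.1 i, p.2 i)) (fun i => (q.1 i, q.2 i)) *
              tilde n y (fun i => (q.1 i, q.2 i))) := by
        rw [← Equiv.sum_comp (Equiv.arrowProdEquivProdArrow (Fin n) (fun _ => Fin 2) (fun _ => Fin 2)).symm]
        refine Finset.sum_congr rfl fun p _ => ?_
        rw [← Equiv.sum_comp (Equiv.arrowProdEquivProdArrow (Fin n) (fun _ => Fin 2) (fun _ => Fin 2)).symm]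
        rfl
    _ = ∑ c, ∑ a, ∑ a', ∑ c',
          (if c' = c then
            (if a' = y + c' then
              (if a = x + c then
                (if ∀ i, x i = 0 → c i = 0 then Cx else 0) *
                  (A a a' * (if ∀ i, y i = 0 → c' i = 0 then Cy else 0))
               else 0) else 0) else 0) := by
        rw [Fintype.sum_prod_type, Finset.sum_comm]
        refine Finset.sum_congr rfl fun c _ => ?_
        refine Finset.sum_congr rfl fun a _ => ?_
        rw [Fintype.sum_prod_type]
        refine Finset.sum_congr rfl fun a' _ => ?_
        refine Finset.sum_congr rfl fun c' _ => ?_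
        rw [tilde_eval, tilde_eval]
        have hx : (∀ i, a i = x i + c i) ↔ a = x + c := ⟨fun h => funext fun i => h i, fun h i => congrFun h i⟩
        have hy : (∀ i, a' i = y i + c' i) ↔ a' = y + c' := ⟨fun h => funext fun i => h i, fun h i => congrFun h i⟩
        have hcc : ((fun i => c i) = fun i => c' i) ↔ c' = c := by
          constructor
          · intro h; funext i; exact (congrFun h i).symm
          · intro h; funext i; exact (congrFun h i).symm
        simp only [AI, hx, hy, hcc, ite_and, apply_ite star, star_zero, ← hCx, ← hCy, hsx]
        split_ifs <;> ring
    _ = ∑ c, (if ∀ i, x i = 0 → c i = 0 then Cx else 0) *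
          (A (x + c) (y + c) * (if ∀ i, y i = 0 → c i = 0 then Cy else 0)) := by
        refine Finset.sum_congr rfl fun c _ => ?_
        simp [Finset.sum_ite_eq', Finset.sum_ite_eq]
    _ = _ := by
        rw [Finset.mul_sum]
        refine Finset.sum_congr rfl fun c _ => ?_
        have hcond : ((∀ i, x i = 0 → c i = 0) ∧ (∀ i, y i = 0 → c i = 0)) ↔
            (∀ i, x i * y i ≠ 1 → c i = 0) := by
          rw [← forall_and]
          refine forall_congr' fun i => ?_
          have : ∀ u v w : Fin 2, ((u = 0 → w = 0) ∧ (v = 0 → w = 0) ↔ (u * v ≠ 1 → w = 0)) := by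
            decide
          exact this (x i) (y i) (c i)
        by_cases h1 : ∀ i, x i = 0 → c i = 0
        · by_cases h2 : ∀ i, y i = 0 → c i = 0
          · rw [if_pos h1, if_pos h2, if_pos (hcond.mp ⟨h1, h2⟩)]
            rw [show Cx * (A (x + c) (y + c) * Cy) = (Cx * Cy) * A (x + c) (y + c) by ring,
              hCx, hCy, const_eq]
          · rw [if_neg h2, if_neg (fun h => h2 (hcond.mpr h).2)]
            ring
        · rw [if_neg h1, if_neg (fun h => h1 (hcond.mpr h).1)]
          ring
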